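/- Let G be a d×d real positive definite matrix and X, Y Hermitian d×d matrices with X ≥ Y (Loewner order). Then Tr(G·Re X) + Tr|√G (Im X) √G| ≥ Tr(G·Re Y) + Tr|√G (Im Y) √G|. -/

import Mathlib

open Matrix
open scoped ComplexOrder
noncomputable section

/-- The positive semidefinite square root of a positive semidefinite matrix, with the
definition it had in the older Mathlib (removed since). -/
def Matrix.PosSemidef.sqrt {n : Type*} [Fintype n] [DecidableEq n] {𝕜 : Type*} [RCLike 𝕜]
    {A : Matrix n n 𝕜} (hA : A.PosSemidef) : Matrix n n 𝕜 :=
  hA.1.eigenvectorUnitary.1 * diagonal ((↑) ∘ (√·) ∘ hA.1.eigenvalues) *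
  (star hA.1.eigenvectorUnitary : Matrix n n 𝕜)

/-- Entrywise real part, as a complex matrix. -/
def reM {m n : Type*} (J : Matrix m n ℂ) : Matrix m n ℂ := fun i j => ((J i j).re : ℂ)

/-- Entrywise imaginary part, as a complex matrix. -/
def imM {m n : Type*} (J : Matrix m n ℂ) : Matrix m n ℂ := fun i j => ((J i j).im : ℂ)

/-- A complex matrix has all real entries. -/
def IsRealMat {m n : Type*} (A : Matrix m n ℂ) : Prop := ∀ i j, (A i j).im = 0

/-- Matrix absolute value `|A| = √(Aᴴ A)`. -/
def matAbs {n : Type*} [Fintype n] [DecidableEq n] (A : Matrix n n ℂ) : Matrix n n ℂ :=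
  (Matrix.posSemidef_conjTranspose_mul_self A).sqrt

set_option linter.unusedSectionVars false
set_option maxHeartbeats 1000000

namespace Matrix.PosSemidef

open scoped MatrixOrder

variable {n : Type*} [Fintype n] [DecidableEq n] {𝕜 : Type*} [RCLike 𝕜]

lemma sqrt_eq_cfc_sqrt {A : Matrix n n 𝕜} (hA : A.PosSemidef) : hA.sqrt = CFC.sqrt A := by
  rw [CFC.sqrt_eq_real_sqrt A hA.nonneg, cfcₙ_eq_cfc (hf0 := Real.sqrt_zero),
    hA.1.cfc_eq, IsHermitian.cfc, Unitary.conjStarAlgAut_apply]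
  rfl

lemma posSemidef_sqrt {A : Matrix n n 𝕜} (hA : A.PosSemidef) : hA.sqrt.PosSemidef := by
  rw [sqrt_eq_cfc_sqrt]; exact (CFC.sqrt_nonneg A).posSemidef

lemma sqrt_mul_self {A : Matrix n n 𝕜} (hA : A.PosSemidef) : hA.sqrt * hA.sqrt = A := by
  rw [sqrt_eq_cfc_sqrt]; exact CFC.sqrt_mul_sqrt_self A hA.nonneg

lemma sq_sqrt {A : Matrix n n 𝕜} (hA : A.PosSemidef) : hA.sqrt ^ 2 = A := by
  rw [sq]; exact hA.sqrt_mul_self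

lemma eq_sqrt_of_sq_eq {A : Matrix n n 𝕜} (hA : A.PosSemidef) {B : Matrix n n 𝕜}
    (hB : B.PosSemidef) (hAB : A ^ 2 = B) : A = hB.sqrt := by
  rw [sqrt_eq_cfc_sqrt, eq_comm, CFC.sqrt_eq_iff B A hB.nonneg hA.nonneg, ← sq, hAB]

end Matrix.PosSemidef

section Aux

variable {n : Type*} [Fintype n] [DecidableEq n]

lemma diag_nonneg' {M : Matrix n n ℂ} (hM : M.PosSemidef) (i : n) : 0 ≤ M i i := by
  exact hM.diag_nonneg

lemma matAbs_hermitian_eq {H : Matrix n n ℂ} (hH : H.IsHermitian) :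
    matAbs H = (hH.eigenvectorUnitary : Matrix n n ℂ) *
      diagonal (fun i => ((|hH.eigenvalues i| : ℝ) : ℂ)) *
      star (hH.eigenvectorUnitary : Matrix n n ℂ) := by
  set U : Matrix n n ℂ := (hH.eigenvectorUnitary : Matrix n n ℂ) with hU
  have hUU : star U * U = 1 := Matrix.mem_unitaryGroup_iff'.mp hH.eigenvectorUnitary.2
  set D : Matrix n n ℂ := diagonal (fun i => ((|hH.eigenvalues i| : ℝ) : ℂ)) with hD
  set Dl : Matrix n n ℂ := diagonal (RCLike.ofReal ∘ hH.eigenvalues) with hDl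
  have hDpsd : D.PosSemidef := .diagonal fun i => Complex.zero_le_real.mpr (abs_nonneg _)
  have hM : (U * D * star U).PosSemidef := by
    have := hDpsd.mul_mul_conjTranspose_same U
    simpa [Matrix.star_eq_conjTranspose] using this
  have assoc : ∀ A B : Matrix n n ℂ, (U * A * star U) * (U * B * star U)
      = U * (A * B) * star U := by
    intro A B
    simp only [Matrix.mul_assoc]
    rw [← Matrix.mul_assoc (star U) U, hUU, Matrix.one_mul]
  have hDD : D * D = Dl * Dl := by
    rw [hD, hDl, diagonal_mul_diagonal, diagonal_mul_diagonal]
    have : (fun i => ((|hH.eigenvalues i| : ℝ) : ℂ) * ((|hH.eigenvalues i| : ℝ) : ℂ))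
        = fun i => (RCLike.ofReal ∘ hH.eigenvalues) i * (RCLike.ofReal ∘ hH.eigenvalues) i := by
      funext i
      simp only [Function.comp_apply]
      rw [show (RCLike.ofReal (hH.eigenvalues i) : ℂ) = ((hH.eigenvalues i : ℝ) : ℂ) from rfl,
        ← Complex.ofReal_mul, ← Complex.ofReal_mul, ← sq, ← sq, sq_abs]
    rw [this]
  have hspec : H = U * Dl * star U := hH.spectral_theorem
  symm
  refine hM.eq_sqrt_of_sq_eq _ ?_
  calc (U * D * star U) ^ 2 = U * (D * D) * star U := by rw [pow_two, assoc]
    _ = (U * Dl * star U) * (U * Dl * star U) := by rw [assoc, hDD]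
    _ = H * H := by rw [← hspec]
    _ = Hᴴ * H := by rw [hH.eq]

lemma trace_matAbs_hermitian {H : Matrix n n ℂ} (hH : H.IsHermitian) :
    Matrix.trace (matAbs H) = ∑ i, ((|hH.eigenvalues i| : ℝ) : ℂ) := by
  rw [matAbs_hermitian_eq hH, Matrix.trace_mul_cycle,
    Matrix.mem_unitaryGroup_iff'.mp hH.eigenvectorUnitary.2,
    Matrix.one_mul, Matrix.trace_diagonal]

lemma matAbs_sub_self_posSemidef {H : Matrix n n ℂ} (hH : H.IsHermitian) :
    (matAbs H - H).PosSemidef := by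
  have key : matAbs H - H = (hH.eigenvectorUnitary : Matrix n n ℂ) *
      diagonal (fun i => ((|hH.eigenvalues i| - hH.eigenvalues i : ℝ) : ℂ)) *
      star (hH.eigenvectorUnitary : Matrix n n ℂ) := by
    have : diagonal (fun i => ((|hH.eigenvalues i| - hH.eigenvalues i : ℝ) : ℂ))
        = diagonal (fun i => ((|hH.eigenvalues i| : ℝ) : ℂ))
          - diagonal (RCLike.ofReal ∘ hH.eigenvalues) := by
      rw [diagonal_sub]
      funext i
      simp [Complex.ofReal_sub]
    rw [this, Matrix.mul_sub, Matrix.sub_mul,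
      ← matAbs_hermitian_eq hH]
    exact congrArg _ hH.spectral_theorem
  rw [key]
  have hD : (diagonal (fun i => ((|hH.eigenvalues i| - hH.eigenvalues i : ℝ) : ℂ))).PosSemidef :=
    .diagonal fun i => Complex.zero_le_real.mpr (by simp [le_abs_self])
  simpa [Matrix.star_eq_conjTranspose] using
    hD.mul_mul_conjTranspose_same (hH.eigenvectorUnitary : Matrix n n ℂ)

lemma trace_matAbs_le_trace {H W : Matrix n n ℂ} (hH : H.IsHermitian)
    (h1 : (W - H).PosSemidef) (h2 : (W + H).PosSemidef) :
    (Matrix.trace (matAbs H)).re ≤ (Matrix.trace W).re := by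
  set U : Matrix n n ℂ := (hH.eigenvectorUnitary : Matrix n n ℂ) with hU
  have hUU' : U * star U = 1 := Matrix.mem_unitaryGroup_iff.mp hH.eigenvectorUnitary.2
  have hdiag : Uᴴ * H * U = diagonal (RCLike.ofReal ∘ hH.eigenvalues) := by
    rw [← Matrix.star_eq_conjTranspose]
    simpa using hH.conjStarAlgAut_star_eigenvectorUnitary
  have htrW : Matrix.trace W = Matrix.trace (Uᴴ * W * U) := by
    rw [← Matrix.star_eq_conjTranspose, Matrix.trace_mul_cycle, hUU', Matrix.one_mul]
  have hineq : ∀ i, ((|hH.eigenvalues i| : ℝ) : ℂ).re ≤ ((Uᴴ * W * U) i i).re := by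
    intro i
    have e1 : (Uᴴ * (W - H) * U) = Uᴴ * W * U - Uᴴ * H * U := by
      rw [Matrix.mul_sub, Matrix.sub_mul]
    have e2 : (Uᴴ * (W + H) * U) = Uᴴ * W * U + Uᴴ * H * U := by
      rw [Matrix.mul_add, Matrix.add_mul]
    have p1 := diag_nonneg' (h1.conjTranspose_mul_mul_same U) i
    have p2 := diag_nonneg' (h2.conjTranspose_mul_mul_same U) i
    rw [e1] at p1; rw [e2] at p2
    have d1 : (Uᴴ * H * U) i i = ((hH.eigenvalues i : ℝ) : ℂ) := by
      rw [hdiag]; simp [diagonal_apply]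
    rw [Matrix.sub_apply, d1] at p1
    rw [Matrix.add_apply, d1] at p2
    have r1 : 0 ≤ ((Uᴴ * W * U) i i).re - hH.eigenvalues i := by
      simpa [Complex.sub_re] using (Complex.le_def.mp p1).1
    have r2 : 0 ≤ ((Uᴴ * W * U) i i).re + hH.eigenvalues i := by
      simpa [Complex.add_re] using (Complex.le_def.mp p2).1
    rw [Complex.ofReal_re]
    rcases abs_cases (hH.eigenvalues i) with ⟨h, _⟩ | ⟨h, _⟩ <;> rw [h] <;> linarith
  calc (Matrix.trace (matAbs H)).re = ∑ i, ((|hH.eigenvalues i| : ℝ) : ℂ).re := by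
        rw [trace_matAbs_hermitian hH, Complex.re_sum]
    _ ≤ ∑ i, ((Uᴴ * W * U) i i).re := Finset.sum_le_sum fun i _ => hineq i
    _ = (Matrix.trace W).re := by
        rw [htrW, Matrix.trace]
        simp [Matrix.diag, Complex.re_sum]

lemma conjM_posSemidef {A : Matrix n n ℂ} (hA : A.PosSemidef) :
    (A.map (starRingEnd ℂ)).PosSemidef := by
  have h : A.map (starRingEnd ℂ) = Aᵀ := by
    ext i j
    have := congrFun (congrFun hA.1 j) i
    simp only [conjTranspose_apply] at this
    simp [Matrix.map_apply, Matrix.transpose_apply, ← this]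
  rw [h]; exact hA.transpose

lemma isRealMat_iff {A : Matrix n n ℂ} : IsRealMat A ↔ A.map (starRingEnd ℂ) = A := by
  constructor
  · intro h; ext i j; simpa [Matrix.map_apply, Complex.conj_eq_iff_im] using h i j
  · intro h i j
    have := congrFun (congrFun h i) j
    simpa [Matrix.map_apply, Complex.conj_eq_iff_im] using this

lemma sqrt_isReal {A : Matrix n n ℂ} (hA : A.PosSemidef) (h : IsRealMat A) :
    IsRealMat hA.sqrt := by
  have hc : (hA.sqrt.map (starRingEnd ℂ)).PosSemidef := conjM_posSemidef hA.posSemidef_sqrt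
  have hsq : (hA.sqrt.map (starRingEnd ℂ)) ^ 2 = A := by
    rw [pow_two, ← Matrix.map_mul, ← pow_two, hA.sq_sqrt, isRealMat_iff.mp h]
  rw [isRealMat_iff]
  exact hc.eq_sqrt_of_sq_eq hA hsq

lemma matAbs_congr {A B : Matrix n n ℂ} (h : Aᴴ * A = Bᴴ * B) : matAbs A = matAbs B :=
  (Matrix.posSemidef_conjTranspose_mul_self A).posSemidef_sqrt.eq_sqrt_of_sq_eq _
    (by rw [(Matrix.posSemidef_conjTranspose_mul_self A).sq_sqrt, h])

lemma matAbs_isReal {A : Matrix n n ℂ} (h : IsRealMat A) : IsRealMat (matAbs A) := by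
  apply sqrt_isReal
  intro i j
  simp only [Matrix.mul_apply, conjTranspose_apply]
  rw [Complex.im_sum]
  refine Finset.sum_eq_zero fun k _ => ?_
  have h1 := h k i; have h2 := h k j
  simp [Complex.mul_im, Complex.conj_im, Complex.conj_re, h1, h2]

lemma isRealMat_mul {A B : Matrix n n ℂ} (hA : IsRealMat A) (hB : IsRealMat B) :
    IsRealMat (A * B) := by
  intro i j
  simp only [Matrix.mul_apply]
  rw [Complex.im_sum]
  exact Finset.sum_eq_zero fun k _ => by simp [Complex.mul_im, hA i k, hB k j]

lemma isRealMat_sub {A B : Matrix n n ℂ} (hA : IsRealMat A) (hB : IsRealMat B) :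
    IsRealMat (A - B) := fun i j => by
  simp [Matrix.sub_apply, Complex.sub_im, hA i j, hB i j]

lemma isRealMat_add {A B : Matrix n n ℂ} (hA : IsRealMat A) (hB : IsRealMat B) :
    IsRealMat (A + B) := fun i j => by
  simp [Matrix.add_apply, Complex.add_im, hA i j, hB i j]

lemma isRealMat_reM {Y : Matrix n n ℂ} : IsRealMat (reM Y) := fun i j => by simp [reM]
lemma isRealMat_imM {Y : Matrix n n ℂ} : IsRealMat (imM Y) := fun i j => by simp [imM]

lemma matrix_decomp (Y : Matrix n n ℂ) : Y = reM Y + Complex.I • imM Y := by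
  ext i j
  simp only [Matrix.add_apply, Matrix.smul_apply, reM, imM, smul_eq_mul]
  rw [mul_comm, Complex.re_add_im]

lemma reM_hermitian {Y : Matrix n n ℂ} (hY : Y.IsHermitian) : (reM Y).IsHermitian := by
  ext i j
  have h := congrFun (congrFun hY j) i
  simp only [conjTranspose_apply] at h ⊢
  simp only [reM, ← h, Complex.conj_re, RingHomCompTriple.comp_apply]
  simp

lemma imM_skew {Y : Matrix n n ℂ} (hY : Y.IsHermitian) : (imM Y)ᴴ = -(imM Y) := by
  ext i j
  have h := congrFun (congrFun hY i) j
  simp only [conjTranspose_apply] at h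
  simp only [conjTranspose_apply, imM, Matrix.neg_apply, ← h]
  simp


lemma lower_bound (G Y V : Matrix n n ℂ)
    (hG : G.PosDef) (hGreal : IsRealMat G)
    (hY : Y.IsHermitian) (hV : V.IsHermitian) (hVreal : IsRealMat V)
    (hVY : (V - Y).PosSemidef) :
    (Matrix.trace (G * reM Y)).re +
        (Matrix.trace (matAbs (hG.posSemidef.sqrt * imM Y * hG.posSemidef.sqrt))).re ≤
      (Matrix.trace (G * V)).re := by
  set S : Matrix n n ℂ := hG.posSemidef.sqrt with hSdef
  have hS : S.PosSemidef := hG.posSemidef.posSemidef_sqrt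
  have hSH : Sᴴ = S := hS.1
  have hSreal : IsRealMat S := sqrt_isReal hG.posSemidef hGreal
  have hSS : S * S = G := hG.posSemidef.sqrt_mul_self
  set A : Matrix n n ℂ := reM Y with hAdef
  set B : Matrix n n ℂ := imM Y with hBdef
  set C : Matrix n n ℂ := S * B * S with hCdef
  set H : Matrix n n ℂ := Complex.I • C with hHdef
  set W : Matrix n n ℂ := S * (V - A) * S with hWdef
  have hBH : Bᴴ = -B := imM_skew hY
  have hCH : Cᴴ = -C := by
    rw [hCdef, conjTranspose_mul, conjTranspose_mul, hSH, hBH]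
    rw [Matrix.mul_assoc, ← Matrix.mul_assoc]
    simp [Matrix.mul_assoc]
  have hHherm : H.IsHermitian := by
    show Hᴴ = H
    rw [hHdef, conjTranspose_smul, hCH]
    simp [Complex.conj_I]
  have hWreal : IsRealMat W :=
    isRealMat_mul (isRealMat_mul hSreal (isRealMat_sub hVreal isRealMat_reM)) hSreal
  have hCreal : IsRealMat C := isRealMat_mul (isRealMat_mul hSreal isRealMat_imM) hSreal
  have hWH : W - H = S * (V - Y) * S := by
    have hVY' : V - Y = (V - A) - Complex.I • B := by
      conv_lhs => rw [matrix_decomp Y]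
      abel
    rw [hVY', Matrix.mul_sub, Matrix.sub_mul, hWdef]
    refine congrArg (fun M => S * (V - A) * S - M) ?_
    rw [Matrix.mul_smul, Matrix.smul_mul, hHdef, hCdef]
  have h1 : (W - H).PosSemidef := by
    rw [hWH]
    have := hVY.mul_mul_conjTranspose_same S
    rwa [hSH] at this
  have h2 : (W + H).PosSemidef := by
    have hconj := conjM_posSemidef h1
    have : (W - H).map (starRingEnd ℂ) = W + H := by
      ext i j
      simp only [Matrix.map_apply, Matrix.sub_apply, Matrix.add_apply, hHdef,
        Matrix.smul_apply, smul_eq_mul, map_sub, _root_.map_mul, Complex.conj_I]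
      rw [Complex.conj_eq_iff_im.mpr (hWreal i j), Complex.conj_eq_iff_im.mpr (hCreal i j)]
      ring
    rwa [this] at hconj
  have key := trace_matAbs_le_trace hHherm h1 h2
  have hMA : matAbs C = matAbs H := by
    apply matAbs_congr
    rw [hHdef, conjTranspose_smul, hCH, Matrix.smul_mul, Matrix.mul_smul, smul_smul]
    simp [Complex.conj_I]
  have htrW : (Matrix.trace W).re = (Matrix.trace (G * V)).re - (Matrix.trace (G * A)).re := by
    have : Matrix.trace W = Matrix.trace (G * V) - Matrix.trace (G * A) := by
      rw [hWdef, Matrix.trace_mul_cycle, hSS, Matrix.mul_sub, trace_sub]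
    rw [this, Complex.sub_re]
  rw [hMA] at *
  linarith [key, htrW]


end Aux

/-- Monotonicity of `X ↦ Tr(G Re X) + Tr|√G (Im X) √G|` in the Loewner order on Hermitian
matrices, for `G` real positive definite. -/
theorem trace_abs_monotone {d : ℕ} (G X Y : Matrix (Fin d) (Fin d) ℂ)
    (hG : G.PosDef) (hGreal : IsRealMat G)
    (hX : X.IsHermitian) (hY : Y.IsHermitian) (hXY : (X - Y).PosSemidef) :
    (Matrix.trace (G * reM X)).re +
        (Matrix.trace (matAbs (hG.posSemidef.sqrt * imM X * hG.posSemidef.sqrt))).re ≥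
      (Matrix.trace (G * reM Y)).re +
        (Matrix.trace (matAbs (hG.posSemidef.sqrt * imM Y * hG.posSemidef.sqrt))).re := by
  set S : Matrix (Fin d) (Fin d) ℂ := hG.posSemidef.sqrt with hSdef
  have hS : S.PosSemidef := hG.posSemidef.posSemidef_sqrt
  have hSH : Sᴴ = S := hS.1
  have hSreal : IsRealMat S := sqrt_isReal hG.posSemidef hGreal
  have hSS : S * S = G := hG.posSemidef.sqrt_mul_self
  have hdetG : G.det ≠ 0 := ne_of_gt hG.det_pos
  have hdetS : IsUnit S.det := by
    refine isUnit_iff_ne_zero.mpr fun h => hdetG ?_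
    rw [← hSS, det_mul, h, mul_zero]
  set T : Matrix (Fin d) (Fin d) ℂ := S⁻¹ with hTdef
  have hST : S * T = 1 := mul_nonsing_inv S hdetS
  have hTS : T * S = 1 := nonsing_inv_mul S hdetS
  have hTH : Tᴴ = T := hS.1.inv
  have hTreal : IsRealMat T := by
    have h1 : S * T.map (starRingEnd ℂ) = 1 := by
      have h2 := congrArg (fun M : Matrix (Fin d) (Fin d) ℂ => M.map (starRingEnd ℂ)) hST
      simp only [Matrix.map_mul] at h2
      rw [isRealMat_iff.mp hSreal] at h2
      rw [h2]
      ext i j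
      simp [Matrix.map_apply, Matrix.one_apply, apply_ite]
    rw [isRealMat_iff]
    exact (inv_eq_right_inv h1).symm
  set B : Matrix (Fin d) (Fin d) ℂ := imM X with hBdef
  set C : Matrix (Fin d) (Fin d) ℂ := S * B * S with hCdef
  set H : Matrix (Fin d) (Fin d) ℂ := Complex.I • C with hHdef
  have hBH : Bᴴ = -B := imM_skew hX
  have hCH : Cᴴ = -C := by
    rw [hCdef, conjTranspose_mul, conjTranspose_mul, hSH, hBH]
    rw [Matrix.mul_assoc, ← Matrix.mul_assoc]
    simp [Matrix.mul_assoc]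
  have hHherm : H.IsHermitian := by
    show Hᴴ = H
    rw [hHdef, conjTranspose_smul, hCH]
    simp [Complex.conj_I]
  have hCreal : IsRealMat C := isRealMat_mul (isRealMat_mul hSreal isRealMat_imM) hSreal
  set M : Matrix (Fin d) (Fin d) ℂ := matAbs C with hMdef
  have hMpsd : M.PosSemidef := (Matrix.posSemidef_conjTranspose_mul_self C).posSemidef_sqrt
  have hMreal : IsRealMat M := matAbs_isReal hCreal
  have hMA : matAbs C = matAbs H := by
    apply matAbs_congr
    rw [hHdef, conjTranspose_smul, hCH, Matrix.smul_mul, Matrix.mul_smul, smul_smul]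
    simp [Complex.conj_I]
  set V : Matrix (Fin d) (Fin d) ℂ := reM X + T * M * T with hVdef
  have hVherm : V.IsHermitian := by
    refine IsHermitian.add (reM_hermitian hX) ?_
    show (T * M * T)ᴴ = T * M * T
    rw [conjTranspose_mul, conjTranspose_mul, hTH, hMpsd.1, Matrix.mul_assoc]
  have hVreal : IsRealMat V :=
    isRealMat_add isRealMat_reM (isRealMat_mul (isRealMat_mul hTreal hMreal) hTreal)
  have hTHT : T * H * T = Complex.I • B := by
    rw [hHdef, Matrix.mul_smul, Matrix.smul_mul]
    congr 1
    calc T * (S * B * S) * T = (T * S) * B * (S * T) := by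
          simp only [Matrix.mul_assoc]
      _ = B := by rw [hST, hTS, Matrix.one_mul, Matrix.mul_one]
  have hVX : (V - X).PosSemidef := by
    have e : V - X = T * (M - H) * T := by
      rw [Matrix.mul_sub, Matrix.sub_mul, hTHT]
      conv_lhs => rw [matrix_decomp X]
      rw [hVdef, ← hBdef]
      abel
    rw [e]
    have hpsd : (M - H).PosSemidef := by
      rw [hMdef, hMA]; exact matAbs_sub_self_posSemidef hHherm
    have := hpsd.mul_mul_conjTranspose_same T
    rwa [hTH] at this
  have hVY : (V - Y).PosSemidef := by
    have e : V - Y = (V - X) + (X - Y) := by abel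
    rw [e]; exact hVX.add hXY
  have hTGT : T * G * T = 1 := by
    rw [← hSS]
    calc T * (S * S) * T = (T * S) * (S * T) := by simp only [Matrix.mul_assoc]
      _ = 1 := by rw [hST, hTS, Matrix.one_mul]
  have hGV : (Matrix.trace (G * V)).re
      = (Matrix.trace (G * reM X)).re + (Matrix.trace M).re := by
    have h1 : G * V = G * reM X + G * (T * M * T) := by rw [hVdef, Matrix.mul_add]
    have h2 : Matrix.trace (G * (T * M * T)) = Matrix.trace M := by
      calc Matrix.trace (G * (T * M * T)) = Matrix.trace ((G * T * M) * T) := by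
            simp only [Matrix.mul_assoc]
        _ = Matrix.trace (T * (G * T * M)) := trace_mul_comm _ _
        _ = Matrix.trace ((T * G * T) * M) := by simp only [Matrix.mul_assoc]
        _ = Matrix.trace M := by rw [hTGT, Matrix.one_mul]
    rw [h1, trace_add, Complex.add_re, h2]
  have hlb := lower_bound G Y V hG hGreal hY hVherm hVreal hVY
  rw [ge_iff_le]
  refine hlb.trans_eq ?_
  rw [hGV]
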